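/- Let X ⊆ ℙ(ℂ^{d+1}) be a σ-invariant subset, and let V ⊆ ℂ^{d+1} be a real ℂ-subspace of dimension d−k (with 1 ≤ d−k ≤ d) such that ℙ(V) ∩ X = ∅. Let f be the projection from ℙ(V): for x = [x̂] ∈ ℙ(ℂ^{d+1}) with x ∉ ℙ(V), f(x) = [P_{V^⊥}(x̂)] ∈ ℙ(V^⊥), where P_{V^⊥} is the orthogonal projection onto V^⊥. Then X is hyperbolic with respect to V if and only if for every x ∈ X, f(x) is a real point of ℙ(V^⊥) if and only if x is a real point. (Proposition 3.2.) -/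

import Mathlib

/-!
Points of `ℙ(ℂ^{d+1})` are modelled by their nonzero representative vectors, and subsets of
`ℙ(ℂ^{d+1})` by their cones: sets of nonzero vectors stable under multiplication by nonzero
scalars. `σ` is coordinatewise complex conjugation; a point `[x]` is real iff `σ(x)` is a
scalar multiple of `x`, and a `ℂ`-subspace `W` is real iff `σ(W) = W` (equivalently, `σ`
maps `W` into `W`, `σ` being an involution). `ℂ^{d+1}` carries the standard Hermitian inner
product (`EuclideanSpace`).
-/

noncomputable section

/-- `ℂ^{d+1}` with the standard Hermitian inner product. -/
abbrev EE (d : ℕ) : Type := EuclideanSpace ℂ (Fin (d + 1))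

/-- Coordinatewise complex conjugation `σ`. -/
def conjE {d : ℕ} (x : EE d) : EE d := WithLp.toLp 2 (fun i => (starRingEnd ℂ) (x i))

/-- `x` represents a real point of projective space: `σ(x)` is proportional to `x`. -/
def IsRealPt {d : ℕ} (x : EE d) : Prop := ∃ c : ℂ, conjE x = c • x

/-- A real (σ-invariant) `ℂ`-subspace. -/
def IsRealSub {d : ℕ} (V : Submodule ℂ (EE d)) : Prop := ∀ x ∈ V, conjE x ∈ V

/-- `X` is the cone over a subset of projective space: `0 ∉ X` and `X` is stable under
multiplication by nonzero scalars. -/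
def IsProjCone {d : ℕ} (X : Set (EE d)) : Prop :=
  (0 : EE d) ∉ X ∧ ∀ x ∈ X, ∀ c : ℂ, c ≠ 0 → c • x ∈ X

/-- `X` is σ-invariant. -/
def IsSigmaInv {d : ℕ} (X : Set (EE d)) : Prop := ∀ x ∈ X, conjE x ∈ X

/-- The projection from `ℙ(V₀)`: orthogonal projection onto `V₀ᗮ` (on cones). -/
def projPerp {d : ℕ} (V₀ : Submodule ℂ (EE d)) (x : EE d) : EE d :=
  (V₀ᗮ.orthogonalProjectionOnto x : EE d)

/-- `X` (a cone over a subset of `ℙ(W)`) is hyperbolic, within the ambient subspace `W`,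
with respect to the real subspace `V ≤ W`: `ℙ(V) ∩ X = ∅` and for every real subspace
`U` with `V ≤ U ≤ W` and `dim U = dim V + 1`, every point of `X ∩ ℙ(U)` is real. -/
def HyperbolicIn {d : ℕ} (W : Submodule ℂ (EE d)) (X : Set (EE d))
    (V : Submodule ℂ (EE d)) : Prop :=
  (∀ x ∈ X, x ∉ V) ∧
    ∀ U : Submodule ℂ (EE d), U ≤ W → V ≤ U →
      Module.finrank ℂ U = Module.finrank ℂ V + 1 →
      IsRealSub U → ∀ x ∈ X, x ∈ U → IsRealPt x

/-- Hyperbolicity in the full ambient space `ℙ(ℂ^{d+1})`. -/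
def Hyperbolic {d : ℕ} (X : Set (EE d)) (V : Submodule ℂ (EE d)) : Prop :=
  HyperbolicIn ⊤ X V

/-!
STATEMENT 8 (Proposition 3.2). Let `X ⊆ ℙ(ℂ^{d+1})` be σ-invariant and `V` a real
subspace of dimension `ℓ = d−k` (`1 ≤ ℓ ≤ d`) with `ℙ(V) ∩ X = ∅`. Let `f` be the
projection from `ℙ(V)` onto `ℙ(Vᗮ)`. Then `X` is hyperbolic with respect to `V` iff for
every `x ∈ X`, `f(x)` is a real point iff `x` is a real point.
-/

section Aux
open Submodule

variable {d : ℕ}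

lemma conjE_conjE (x : EE d) : conjE (conjE x) = x := by
  ext i; simp [conjE]

lemma conjE_add (x y : EE d) : conjE (x + y) = conjE x + conjE y := by
  ext i; simp [conjE]

lemma conjE_sub (x y : EE d) : conjE (x - y) = conjE x - conjE y := by
  ext i; simp [conjE]

lemma conjE_smul (c : ℂ) (x : EE d) : conjE (c • x) = (starRingEnd ℂ c) • conjE x := by
  ext i; simp [conjE]

lemma inner_conjE (x y : EE d) :
    (inner ℂ (conjE x) (conjE y) : ℂ) = starRingEnd ℂ (inner ℂ x y : ℂ) := by
  simp [conjE, PiLp.inner_apply, map_sum, mul_comm]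

lemma IsRealSub.orthogonal {V : Submodule ℂ (EE d)} (hV : IsRealSub V) :
    IsRealSub Vᗮ := by
  intro y hy
  intro v hv
  have h := inner_conjE v (conjE y)
  rw [conjE_conjE] at h
  have h0 : (inner ℂ (conjE v) y : ℂ) = 0 := hy (conjE v) (hV v hv)
  have : starRingEnd ℂ (inner ℂ v (conjE y) : ℂ) = 0 := by rw [← h, h0]
  simpa using congrArg (starRingEnd ℂ) this

lemma conjE_projPerp {V : Submodule ℂ (EE d)} (hV : IsRealSub V) (x : EE d) :
    conjE (projPerp V x) = projPerp V (conjE x) := by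
  unfold projPerp
  symm
  apply Submodule.eq_starProjection_of_mem_orthogonal
  · exact hV.orthogonal _ (Vᗮ.orthogonalProjectionOnto x).2
  · rw [← conjE_sub]
    have hmem : x - (Vᗮ.orthogonalProjectionOnto x : EE d) ∈ V := by
      have := Submodule.sub_starProjection_mem_orthogonal (K := Vᗮ) x
      rwa [Submodule.orthogonal_orthogonal] at this
    exact V.le_orthogonal_orthogonal (hV _ hmem)

lemma realPt_projPerp_of_realPt {V : Submodule ℂ (EE d)} (hV : IsRealSub V)
    {x : EE d} (hx : IsRealPt x) : IsRealPt (projPerp V x) := by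
  obtain ⟨c, hc⟩ := hx
  refine ⟨c, ?_⟩
  rw [conjE_projPerp hV, hc]
  unfold projPerp
  rw [map_smul]
  rfl

lemma projPerp_mem_sup {V : Submodule ℂ (EE d)} {U : Submodule ℂ (EE d)}
    (hVU : V ≤ U) {x : EE d} (hx : x ∈ U) : projPerp V x ∈ U := by
  have hmem : x - projPerp V x ∈ V := by
    have := Submodule.sub_starProjection_mem_orthogonal (K := Vᗮ) x
    rwa [Submodule.orthogonal_orthogonal] at this
  have : projPerp V x = x - (x - projPerp V x) := (sub_sub_cancel _ _).symm
  rw [this]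
  exact U.sub_mem hx (hVU hmem)

lemma projPerp_ne_zero {V : Submodule ℂ (EE d)} {x : EE d} (hx : x ∉ V) :
    projPerp V x ≠ 0 := by
  intro h
  apply hx
  have hmem : x - projPerp V x ∈ V := by
    have := Submodule.sub_starProjection_mem_orthogonal (K := Vᗮ) x
    rwa [Submodule.orthogonal_orthogonal] at this
  rw [h, sub_zero] at hmem
  exact hmem

end Aux

theorem stmt8 (d ℓ : ℕ) (hℓ1 : 1 ≤ ℓ) (hℓ2 : ℓ ≤ d)
    (X : Set (EE d)) (hXcone : IsProjCone X) (hXσ : IsSigmaInv X)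
    (V : Submodule ℂ (EE d)) (hVreal : IsRealSub V)
    (hVdim : Module.finrank ℂ V = ℓ)
    (hdisj : ∀ x ∈ X, x ∉ V) :
    Hyperbolic X V ↔ ∀ x ∈ X, (IsRealPt (projPerp V x) ↔ IsRealPt x) := by
  constructor
  · rintro ⟨-, hhyp⟩ x hxX
    constructor
    · intro hP
      have hxV : x ∉ V := hdisj x hxX
      have hx0 : x ≠ 0 := fun h => hXcone.1 (h ▸ hxX)
      set U := V ⊔ Submodule.span ℂ {x} with hU
      have hxU : x ∈ U := Submodule.mem_sup_right (Submodule.mem_span_singleton_self x)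
      have hinf : V ⊓ Submodule.span ℂ {x} = ⊥ := by
        rw [eq_bot_iff]; rintro y ⟨hyV, hyS⟩
        obtain ⟨a, rfl⟩ := Submodule.mem_span_singleton.1 hyS
        by_cases ha : a = 0
        · simp [ha]
        · exact absurd ((Submodule.smul_mem_iff _ ha).1 hyV) hxV
      have hdim : Module.finrank ℂ U = Module.finrank ℂ V + 1 := by
        have h := Submodule.finrank_sup_add_finrank_inf_eq V (Submodule.span ℂ {x})
        rw [hinf, finrank_bot, finrank_span_singleton hx0] at h
        rw [hU]
        omega
      obtain ⟨c, hc⟩ := hP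
      have hxw : x - projPerp V x ∈ V := by
        have := Submodule.sub_starProjection_mem_orthogonal (K := Vᗮ) x
        rwa [Submodule.orthogonal_orthogonal] at this
      have hσx : conjE x ∈ U := by
        have hrep : conjE x =
            (conjE (x - projPerp V x) - c • (x - projPerp V x)) + c • x := by
          rw [conjE_sub, hc, smul_sub]; abel
        rw [hrep]
        exact U.add_mem
          (Submodule.mem_sup_left (V.sub_mem (hVreal _ hxw) (V.smul_mem c hxw)))
          (Submodule.mem_sup_right
            (Submodule.smul_mem _ c (Submodule.mem_span_singleton_self x)))
      have hUreal : IsRealSub U := by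
        intro y hy
        obtain ⟨v, hv, z, hz, rfl⟩ := Submodule.mem_sup.1 hy
        obtain ⟨a, rfl⟩ := Submodule.mem_span_singleton.1 hz
        rw [conjE_add, conjE_smul]
        exact U.add_mem (Submodule.mem_sup_left (hVreal v hv)) (U.smul_mem _ hσx)
      exact hhyp U le_top le_sup_left hdim hUreal x hxX hxU
    · exact realPt_projPerp_of_realPt hVreal
  · intro hiff
    refine ⟨hdisj, ?_⟩
    intro U _ hVU hdimU hUreal x hxX hxU
    have hxV := hdisj x hxX
    have hw : projPerp V x ∈ U ⊓ Vᗮ :=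
      ⟨projPerp_mem_sup hVU hxU, (Vᗮ.orthogonalProjectionOnto x).2⟩
    have hw0 := projPerp_ne_zero hxV
    have hσw : conjE (projPerp V x) ∈ U ⊓ Vᗮ :=
      ⟨hUreal _ hw.1, hVreal.orthogonal _ hw.2⟩
    have hle : Module.finrank ℂ (U ⊓ Vᗮ : Submodule ℂ (EE d)) ≤ 1 := by
      have h1 := Submodule.finrank_sup_add_finrank_inf_eq V (U ⊓ Vᗮ)
      have h2 : V ⊓ (U ⊓ Vᗮ) = ⊥ := by
        rw [eq_bot_iff]
        refine le_trans ?_ V.orthogonal_disjoint.le_bot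
        exact le_inf inf_le_left (le_trans inf_le_right inf_le_right)
      have h3 : V ⊔ (U ⊓ Vᗮ) ≤ U := sup_le hVU inf_le_left
      have h4 : Module.finrank ℂ (V ⊔ (U ⊓ Vᗮ) : Submodule ℂ (EE d)) ≤
          Module.finrank ℂ U := Submodule.finrank_mono h3
      rw [h2, finrank_bot] at h1
      omega
    have hspan : Submodule.span ℂ {projPerp V x} = U ⊓ Vᗮ := by
      apply Submodule.eq_of_le_of_finrank_le
        (Submodule.span_le.2 (Set.singleton_subset_iff.2 hw))
      rw [finrank_span_singleton hw0]
      exact hle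
    have hmem : conjE (projPerp V x) ∈ Submodule.span ℂ {projPerp V x} :=
      hspan ▸ hσw
    obtain ⟨c, hc⟩ := Submodule.mem_span_singleton.1 hmem
    exact (hiff x hxX).1 ⟨c, hc.symm⟩
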